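/- (Lemma: W_β is a Noether symmetry.) Let k ∈ ℝ and let β : ℝ³ → ℝ be a C² function satisfying Δ_{H¹}β + kβ = 0. Then for every C² function u = u(x,y,t) on ℝ³ the following identity holds pointwise: −kβu + β_x(u_x + 2y·u_t) + β_y(u_y − 2x·u_t) + β_t(4(x²+y²)u_t + 2y·u_x − 2x·u_y) = ∂_x[(β_x + 2yβ_t)u] + ∂_y[(β_y − 2xβ_t)u] + ∂_t[(2yβ_x − 2xβ_y + 4(x²+y²)β_t)u]. In other words, the prolonged action of the symmetry W_β = β∂_u on the Lagrangian L_k = ½u_x² + ½u_y² + 2(x²+y²)u_t² + 2y·u_x·u_t − 2x·u_y·u_t − (k/2)u² is a total divergence. -/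

import Mathlib

/-- Partial derivative with respect to the first coordinate (x). -/
noncomputable def pdx (u : ℝ × ℝ × ℝ → ℝ) : ℝ × ℝ × ℝ → ℝ :=
  fun p => fderiv ℝ u p (1, 0, 0)

/-- Partial derivative with respect to the second coordinate (y). -/
noncomputable def pdy (u : ℝ × ℝ × ℝ → ℝ) : ℝ × ℝ × ℝ → ℝ :=
  fun p => fderiv ℝ u p (0, 1, 0)

/-- Partial derivative with respect to the third coordinate (t). -/
noncomputable def pdt (u : ℝ × ℝ × ℝ → ℝ) : ℝ × ℝ × ℝ → ℝ :=
  fun p => fderiv ℝ u p (0, 0, 1)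

/-- The Kohn–Laplace operator on the Heisenberg group H¹:
`Δ u = u_xx + u_yy + 4(x²+y²) u_tt + 4y u_xt − 4x u_yt`. -/
noncomputable def KohnLaplace (u : ℝ × ℝ × ℝ → ℝ) : ℝ × ℝ × ℝ → ℝ :=
  fun p => pdx (pdx u) p + pdy (pdy u) p
    + 4 * (p.1 ^ 2 + p.2.1 ^ 2) * pdt (pdt u) p
    + 4 * p.2.1 * pdt (pdx u) p - 4 * p.1 * pdt (pdy u) p

/-- Lemma: `W_β` is a Noether symmetry: if `β` is C² with
`Δ_{H¹}β + kβ = 0`, then for every C² function `u` on ℝ³ the prolonged action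
of `W_β = β ∂_u` on the Lagrangian `L_k` is a total divergence:
`−kβu + β_x(u_x + 2y u_t) + β_y(u_y − 2x u_t)
  + β_t(4(x²+y²)u_t + 2y u_x − 2x u_y)
  = ∂_x[(β_x+2yβ_t)u] + ∂_y[(β_y−2xβ_t)u]
  + ∂_t[(2yβ_x−2xβ_y+4(x²+y²)β_t)u]`. -/
theorem wBeta_noether_symmetry (k : ℝ) (β : ℝ × ℝ × ℝ → ℝ)
    (hβ : ContDiff ℝ 2 β) (hβeq : ∀ p, KohnLaplace β p + k * β p = 0)
    (u : ℝ × ℝ × ℝ → ℝ) (hu : ContDiff ℝ 2 u) :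
    ∀ p : ℝ × ℝ × ℝ,
      -(k * β p * u p) + pdx β p * (pdx u p + 2 * p.2.1 * pdt u p)
        + pdy β p * (pdy u p - 2 * p.1 * pdt u p)
        + pdt β p * (4 * (p.1 ^ 2 + p.2.1 ^ 2) * pdt u p
            + 2 * p.2.1 * pdx u p - 2 * p.1 * pdy u p)
      = pdx (fun q => (pdx β q + 2 * q.2.1 * pdt β q) * u q) p
        + pdy (fun q => (pdy β q - 2 * q.1 * pdt β q) * u q) p
        + pdt (fun q => (2 * q.2.1 * pdx β q - 2 * q.1 * pdy β q
            + 4 * (q.1 ^ 2 + q.2.1 ^ 2) * pdt β q) * u q) p := by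
  intro p
  have hβ1 : ContDiff ℝ 1 (fderiv ℝ β) := hβ.fderiv_right (by norm_num)
  have hβd : DifferentiableAt ℝ (fderiv ℝ β) p := (hβ1.differentiable one_ne_zero) p
  have hDw : ∀ w : ℝ × ℝ × ℝ, HasFDerivAt (fun q => fderiv ℝ β q w)
      ((fderiv ℝ (fderiv ℝ β) p).flip w) p := by
    intro w
    simpa using hβd.hasFDerivAt.clm_apply (hasFDerivAt_const w p)
  have hsym : ∀ v w, fderiv ℝ (fderiv ℝ β) p v w = fderiv ℝ (fderiv ℝ β) p w v :=
    (hβ.contDiffAt.isSymmSndFDerivAt (by norm_num))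
  have hx : HasFDerivAt (fun q : ℝ × ℝ × ℝ => q.1)
      (ContinuousLinearMap.fst ℝ ℝ (ℝ × ℝ)) p := hasFDerivAt_fst
  have hy : HasFDerivAt (fun q : ℝ × ℝ × ℝ => q.2.1)
      ((ContinuousLinearMap.fst ℝ ℝ ℝ).comp (ContinuousLinearMap.snd ℝ ℝ (ℝ × ℝ))) p :=
    hasFDerivAt_fst.comp p hasFDerivAt_snd
  have hu' : HasFDerivAt u (fderiv ℝ u p) p :=
    ((hu.differentiable (by norm_num)) p).hasFDerivAt
  have hβeq' := hβeq p
  unfold KohnLaplace pdx pdy pdt at hβeq'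
  simp only [pdx, pdy, pdt]
  have hF1 := (((hDw (1,0,0)).add ((hy.const_mul 2).mul (hDw (0,0,1)))).mul hu').fderiv
  have hF2 := (((hDw (0,1,0)).sub ((hx.const_mul 2).mul (hDw (0,0,1)))).mul hu').fderiv
  have hr : HasFDerivAt (fun q : ℝ × ℝ × ℝ => q.1 ^ 2 + q.2.1 ^ 2)
      ((p.1 • ContinuousLinearMap.fst ℝ ℝ (ℝ × ℝ) + p.1 • ContinuousLinearMap.fst ℝ ℝ (ℝ × ℝ))
        + (p.2.1 • (ContinuousLinearMap.fst ℝ ℝ ℝ).comp (ContinuousLinearMap.snd ℝ ℝ (ℝ × ℝ))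
          + p.2.1 • (ContinuousLinearMap.fst ℝ ℝ ℝ).comp (ContinuousLinearMap.snd ℝ ℝ (ℝ × ℝ)))) p := by
    simpa [pow_two, Pi.mul_def, Pi.add_def] using (hx.mul hx).add (hy.mul hy)
  have hF3 := (((((hy.const_mul 2).mul (hDw (1,0,0))).sub
      ((hx.const_mul 2).mul (hDw (0,1,0)))).add
      ((hr.const_mul 4).mul (hDw (0,0,1)))).mul hu').fderiv
  simp only [Pi.mul_def, Pi.add_def, Pi.sub_def] at hF1 hF2 hF3
  rw [hF1, hF2, hF3]
  rw [(hDw (1,0,0)).fderiv, (hDw (0,1,0)).fderiv, (hDw (0,0,1)).fderiv] at hβeq'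
  simp only [ContinuousLinearMap.add_apply, ContinuousLinearMap.sub_apply,
    ContinuousLinearMap.smul_apply, ContinuousLinearMap.flip_apply,
    ContinuousLinearMap.coe_comp', Function.comp_apply,
    ContinuousLinearMap.coe_fst', ContinuousLinearMap.coe_snd',
    smul_eq_mul] at hβeq' ⊢
  have hs1 := hsym (1,0,0) (0,0,1)
  have hs2 := hsym (0,1,0) (0,0,1)
  norm_num at hβeq' hs1 hs2 ⊢
  linear_combination (-(u p)) * hβeq' - (2 * p.2.1 * u p) * hs1 + (2 * p.1 * u p) * hs2
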